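/- In the W[2]-hardness reduction: let F be a family of graphs closed under addition of isolated vertices, containing no edgeless graph, with all members having exactly r non-isolated vertices. Let δ be the minimum over F ∈ F of the minimum degree among non-isolated vertices of F, attained by F_δ with n_δ vertices; let F_e ∈ F have the minimum number m_e of edges and n_e vertices. For a Hitting Set instance (U, 𝒮) with U = {u₁,…,u_n}, build hypergraph H with vertex set V_δ (of size r−1) ∪ ⋃ᵢ Vⁱ (each Vⁱ of size n_δ − r + 1) ∪ ⋃_{u≠v ∈ V_δ} V_{u,v} (each of size n_e − 2), with hyperedges h_{u,v} = {u,v} ∪ V_{u,v} for all pairs u ≠ v in V_δ, and h_S = V_δ ∪ ⋃_{i : u_i ∈ S} Vⁱ for all S ∈ 𝒮. Then τ(U, 𝒮) ≤ k if and only if ov_F(H) ≤ binom(r−1, 2)·m_e + k·δ. -/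

import Mathlib

set_option synthInstance.maxSize 600

def Overlays (F : ∀ n, Set (SimpleGraph (Fin n))) {V : Type} [Fintype V] [DecidableEq V]
    (G : SimpleGraph V) (H : Finset (Finset V)) : Prop :=
  ∀ S ∈ H, ∃ A ∈ F S.card, ∃ e : Fin S.card ≃ {x // x ∈ S},
    ∀ a b, A.Adj a b → G.Adj (e a).1 (e b).1

def ClosedUnderIsolated (F : ∀ n, Set (SimpleGraph (Fin n))) : Prop :=
  ∀ n, ∀ A ∈ F n, A.map (⟨Fin.castSucc, Fin.castSucc_injective n⟩ : Fin n ↪ Fin (n + 1)) ∈ F (n + 1)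

/-- The hypergraph of the W[2]-hardness reduction: vertex set
`V_δ ⊕ ⋃ᵢ Vⁱ ⊕ ⋃_{u<v} V_{u,v}` (with `|V_δ| = r'`, `|Vⁱ| = a`, `|V_{u,v}| = b`), with a
hyperedge `h_{u,v} = {u,v} ∪ V_{u,v}` for each pair `u < v` of `V_δ` and a hyperedge
`h_S = V_δ ∪ ⋃_{i ∈ S} Vⁱ` for each `S ∈ 𝒮`. -/
abbrev RedVert (r' a b : ℕ) (U : Type) : Type :=
  Fin r' ⊕ (U × Fin a) ⊕ ({q : Fin r' × Fin r' // q.1 < q.2} × Fin b)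

def constructedH (r' a b : ℕ) (U : Type) [Fintype U] [DecidableEq U]
    (𝒮 : Finset (Finset U)) : Finset (Finset (RedVert r' a b U)) :=
  ((Finset.univ : Finset {q : Fin r' × Fin r' // q.1 < q.2}).image (fun q =>
      ({Sum.inl q.1.1, Sum.inl q.1.2} : Finset (RedVert r' a b U)) ∪
        Finset.univ.image (fun i : Fin b => Sum.inr (Sum.inr (q, i)))))
    ∪ 𝒮.image (fun S =>
      ((Finset.univ.image Sum.inl : Finset (RedVert r' a b U))) ∪
        ((S ×ˢ (Finset.univ : Finset (Fin a))).image (fun x => Sum.inr (Sum.inl x))))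

lemma card_lt_pairs (n : ℕ) :
    Fintype.card {q : Fin n × Fin n // q.1 < q.2} = n.choose 2 := by
  have e : {q : Fin n × Fin n // q.1 < q.2} ≃ Σ j : Fin n, Fin j.1 :=
    { toFun := fun q => ⟨q.1.2, ⟨q.1.1.1, q.2⟩⟩
      invFun := fun x => ⟨(⟨x.2.1, x.2.2.trans x.1.2⟩, x.1), x.2.2⟩
      left_inv := by rintro ⟨⟨a, b⟩, h⟩; rfl
      right_inv := by rintro ⟨j, i⟩; rfl }
  rw [Fintype.card_congr e, Fintype.card_sigma]
  simp only [Fintype.card_fin]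
  rw [Fin.sum_univ_eq_sum_range (fun i => i) n]
  have h1 := Finset.sum_range_id_mul_two n
  have h2 := Nat.choose_two_right n
  omega

lemma exists_equiv_extend {α β : Type*} [Fintype α] [Fintype β] [DecidableEq α] [DecidableEq β]
    (h : Fintype.card α = Fintype.card β) (s : Finset α) (f : α → β)
    (hinj : Set.InjOn f ↑s) : ∃ e : α ≃ β, ∀ x ∈ s, e x = f x := by
  classical
  set t := s.image f with ht
  have hcard : (Finset.univ \ s).card = (Finset.univ \ t).card := by
    rw [Finset.card_sdiff_of_subset (Finset.subset_univ _), Finset.card_sdiff_of_subset (Finset.subset_univ _),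
      Finset.card_univ, Finset.card_univ, h, Finset.card_image_of_injOn hinj]
  have e' := Finset.equivOfCardEq hcard
  have hmem : ∀ x : α, x ∉ s → x ∈ Finset.univ \ s := by
    intro x hx; simp [hx]
  set g : α → β := fun x => if hx : x ∈ s then f x else (e' ⟨x, hmem x hx⟩ : β) with hg
  have hnotin : ∀ (x : α) (hx : x ∉ s), ((e' ⟨x, hmem x hx⟩ : β)) ∉ t := by
    intro x hx
    have := (e' ⟨x, hmem x hx⟩).2
    simp only [Finset.mem_sdiff] at this
    exact this.2
  have hgs : ∀ x ∈ s, g x = f x := by intro x hx; simp only [hg, dif_pos hx]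
  have hgns : ∀ (x : α) (hx : x ∉ s), g x = (e' ⟨x, hmem x hx⟩ : β) := by
    intro x hx; simp only [hg, dif_neg hx]
  have hginj : Function.Injective g := by
    intro x y hxy
    by_cases hx : x ∈ s <;> by_cases hy : y ∈ s
    · exact hinj hx hy (by rwa [hgs x hx, hgs y hy] at hxy)
    · rw [hgs x hx, hgns y hy] at hxy
      exact absurd (hxy ▸ Finset.mem_image_of_mem f hx) (hnotin y hy)
    · rw [hgns x hx, hgs y hy] at hxy
      exact absurd (hxy ▸ Finset.mem_image_of_mem f hy) (hnotin x hx)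
    · rw [hgns x hx, hgns y hy] at hxy
      have := e'.injective (Subtype.coe_injective hxy)
      exact Subtype.mk_eq_mk.1 this
  refine ⟨Equiv.ofBijective g ((Fintype.bijective_iff_injective_and_card g).2 ⟨hginj, h⟩),
    fun x hx => ?_⟩
  simpa [Equiv.ofBijective] using hgs x hx

lemma closure_le (F : ∀ n, Set (SimpleGraph (Fin n))) (hclosed : ClosedUnderIsolated F)
    {n : ℕ} (A : SimpleGraph (Fin n)) (hA : A ∈ F n) :
    ∀ M, n ≤ M → ∃ B ∈ F M, ∃ ι : Fin n → Fin M, Function.Injective ι ∧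
      (∀ a b, B.Adj a b → ∃ x y, A.Adj x y ∧ ι x = a ∧ ι y = b) := by
  intro M hM
  induction M, hM using Nat.le_induction with
  | base => exact ⟨A, hA, id, Function.injective_id, fun a b hab => ⟨a, b, hab, rfl, rfl⟩⟩
  | succ M hM ih =>
    obtain ⟨B, hB, ι, hι, hadj⟩ := ih
    refine ⟨B.map (⟨Fin.castSucc, Fin.castSucc_injective M⟩ : Fin M ↪ Fin (M + 1)), hclosed M B hB,
      Fin.castSucc ∘ ι, (Fin.castSucc_injective M).comp hι, ?_⟩
    intro a b hab
    rw [SimpleGraph.map_adj] at hab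
    obtain ⟨u, v, huv, hu, hv⟩ := hab
    obtain ⟨x, y, hxy, hx, hy⟩ := hadj u v huv
    subst hx hy
    exact ⟨x, y, hxy, hu, hv⟩

lemma hitting_lemma {V U : Type} [DecidableEq U] (δ : ℕ) (hδ : 1 ≤ δ) (blk : V → Option U) :
    ∀ (k : ℕ) (𝒮 : Finset (Finset U)) (E : Finset (Sym2 V)),
      E.card ≤ k * δ →
      (∀ S ∈ 𝒮, ∃ u ∈ S, ∃ E₀ ⊆ E, δ ≤ E₀.card ∧ ∀ e ∈ E₀,
        (∃ x ∈ e, blk x = some u) ∧ (∀ x ∈ e, ∀ u', blk x = some u' → u' ∈ S)) →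
      ∃ K : Finset U, K.card ≤ k ∧ ∀ S ∈ 𝒮, ∃ u ∈ K, u ∈ S := by
  intro k
  induction k with
  | zero =>
    intro 𝒮 E hE hwit
    refine ⟨∅, le_rfl, fun S hS => ?_⟩
    obtain ⟨u, -, E₀, hE₀E, hE₀card, -⟩ := hwit S hS
    have := Finset.card_le_card hE₀E
    omega
  | succ k ih =>
    intro 𝒮 E hE hwit
    classical
    rcases 𝒮.eq_empty_or_nonempty with h | ⟨S₀, hS₀⟩
    · exact ⟨∅, by simp, by simp [h]⟩
    obtain ⟨u₀, hu₀S, E₀, hE₀E, hE₀card, hE₀⟩ := hwit S₀ hS₀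
    have hE'card : (E.filter (fun e => ∀ x ∈ e, blk x ≠ some u₀)).card ≤ k * δ := by
      have h1 : E₀ ⊆ E.filter (fun e => ¬ ∀ x ∈ e, blk x ≠ some u₀) := by
        intro e he
        refine Finset.mem_filter.2 ⟨hE₀E he, ?_⟩
        obtain ⟨x, hx, hbx⟩ := (hE₀ e he).1
        push_neg
        exact ⟨x, hx, hbx⟩
      have h2 := Finset.card_filter_add_card_filter_not (s := E)
        (p := fun e => ∀ x ∈ e, blk x ≠ some u₀)
      have h3 := Finset.card_le_card h1
      have h4 : (k + 1) * δ = k * δ + δ := by ring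
      omega
    have hwit' : ∀ S ∈ 𝒮.filter (fun S => u₀ ∉ S), ∃ u ∈ S,
        ∃ E₀ ⊆ E.filter (fun e => ∀ x ∈ e, blk x ≠ some u₀), δ ≤ E₀.card ∧ ∀ e ∈ E₀,
        (∃ x ∈ e, blk x = some u) ∧ (∀ x ∈ e, ∀ u', blk x = some u' → u' ∈ S) := by
      intro S hS
      obtain ⟨hS𝒮, hu₀S'⟩ := Finset.mem_filter.1 hS
      obtain ⟨u, huS, E₁, hE₁E, hE₁card, hE₁⟩ := hwit S hS𝒮
      refine ⟨u, huS, E₁, ?_, hE₁card, hE₁⟩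
      intro e he
      refine Finset.mem_filter.2 ⟨hE₁E he, ?_⟩
      intro x hx hbx
      exact hu₀S' ((hE₁ e he).2 x hx u₀ hbx)
    obtain ⟨K', hK'card, hK'⟩ := ih (𝒮.filter (fun S => u₀ ∉ S))
      (E.filter (fun e => ∀ x ∈ e, blk x ≠ some u₀)) hE'card hwit'
    refine ⟨insert u₀ K', ?_, ?_⟩
    · calc (insert u₀ K').card ≤ K'.card + 1 := Finset.card_insert_le _ _
        _ ≤ k + 1 := by omega
    · intro S hS
      by_cases hu₀ : u₀ ∈ S
      · exact ⟨u₀, Finset.mem_insert_self _ _, hu₀⟩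
      · obtain ⟨u, huK', huS⟩ := hK' S (Finset.mem_filter.2 ⟨hS, hu₀⟩)
        exact ⟨u, Finset.mem_insert_of_mem huK', huS⟩

section helpers

variable {r' a b : ℕ} {U : Type} [Fintype U] [DecidableEq U]

def pairHyp (r' a b : ℕ) (U : Type) [Fintype U] [DecidableEq U]
    (q : {q : Fin r' × Fin r' // q.1 < q.2}) : Finset (RedVert r' a b U) :=
  ({Sum.inl q.1.1, Sum.inl q.1.2} : Finset (RedVert r' a b U)) ∪
    Finset.univ.image (fun i : Fin b => Sum.inr (Sum.inr (q, i)))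

def setHyp (r' a b : ℕ) (U : Type) [Fintype U] [DecidableEq U]
    (S : Finset U) : Finset (RedVert r' a b U) :=
  ((Finset.univ.image Sum.inl : Finset (RedVert r' a b U))) ∪
    ((S ×ˢ (Finset.univ : Finset (Fin a))).image (fun x => Sum.inr (Sum.inl x)))

lemma constructedH_eq (𝒮 : Finset (Finset U)) :
    constructedH r' a b U 𝒮 =
      (Finset.univ.image (pairHyp r' a b U)) ∪ 𝒮.image (setHyp r' a b U) := rfl

lemma mem_pairHyp {q : {q : Fin r' × Fin r' // q.1 < q.2}} {x : RedVert r' a b U} :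
    x ∈ pairHyp r' a b U q ↔
      x = Sum.inl q.1.1 ∨ x = Sum.inl q.1.2 ∨ ∃ i, x = Sum.inr (Sum.inr (q, i)) := by
  simp only [pairHyp, Finset.mem_union, Finset.mem_insert, Finset.mem_singleton,
    Finset.mem_image, Finset.mem_univ, true_and]
  constructor
  · rintro ((h | h) | ⟨i, rfl⟩)
    · exact Or.inl h
    · exact Or.inr (Or.inl h)
    · exact Or.inr (Or.inr ⟨i, rfl⟩)
  · rintro (h | h | ⟨i, rfl⟩)
    · exact Or.inl (Or.inl h)
    · exact Or.inl (Or.inr h)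
    · exact Or.inr ⟨i, rfl⟩

lemma mem_setHyp {S : Finset U} {x : RedVert r' a b U} :
    x ∈ setHyp r' a b U S ↔
      (∃ i, x = Sum.inl i) ∨ ∃ u j, u ∈ S ∧ x = Sum.inr (Sum.inl (u, j)) := by
  simp only [setHyp, Finset.mem_union, Finset.mem_image, Finset.mem_univ, true_and,
    Finset.mem_product]
  constructor
  · rintro (⟨i, rfl⟩ | ⟨⟨u, j⟩, ⟨hu, -⟩, rfl⟩)
    · exact Or.inl ⟨i, rfl⟩
    · exact Or.inr ⟨u, j, hu, rfl⟩
  · rintro (⟨i, rfl⟩ | ⟨u, j, hu, rfl⟩)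
    · exact Or.inl ⟨i, rfl⟩
    · exact Or.inr ⟨(u, j), by simp [hu], rfl⟩

lemma pairHyp_card (q : {q : Fin r' × Fin r' // q.1 < q.2}) :
    (pairHyp r' a b U q).card = 2 + b := by
  rw [pairHyp, Finset.card_union_of_disjoint, Finset.card_image_of_injective _
    (fun i j h => by simpa using h), Finset.card_univ, Fintype.card_fin]
  · congr 1
    rw [Finset.card_insert_of_notMem (by simp [Sum.inl.injEq, Fin.ext_iff, Nat.ne_of_lt q.2,
        (q.2 : q.1.1 < q.1.2).ne]), Finset.card_singleton]
  · rw [Finset.disjoint_left]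
    rintro x hx hx'
    simp only [Finset.mem_insert, Finset.mem_singleton] at hx
    simp only [Finset.mem_image] at hx'
    obtain ⟨i, -, rfl⟩ := hx'
    rcases hx with h | h <;> exact nomatch h

lemma setHyp_card (S : Finset U) :
    (setHyp r' a b U S).card = r' + S.card * a := by
  rw [setHyp, Finset.card_union_of_disjoint]
  · rw [Finset.card_image_of_injective _ Sum.inl_injective, Finset.card_univ, Fintype.card_fin,
      Finset.card_image_of_injective _ (fun x y h => by simpa using h),
      Finset.card_product, Finset.card_univ, Fintype.card_fin]
  · rw [Finset.disjoint_left]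
    rintro x hx hx'
    simp only [Finset.mem_image] at hx hx'
    obtain ⟨i, -, rfl⟩ := hx
    obtain ⟨p, -, h⟩ := hx'
    exact nomatch h

def blk {r' a b : ℕ} {U : Type} : RedVert r' a b U → Option U :=
  fun x => match x with
  | .inr (.inl (u, _)) => some u
  | _ => none

lemma blk_eq_some {x : RedVert r' a b U} {u : U} :
    blk x = some u ↔ ∃ j, x = Sum.inr (Sum.inl (u, j)) := by
  rcases x with i | ⟨⟨v, j⟩⟩ | p
  · simp [blk]
  · constructor
    · intro h
      have hv : v = u := by simpa [blk] using h
      exact ⟨j, by rw [hv]⟩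
    · rintro ⟨j', h⟩
      have h2 : (v, j) = (u, j') := by
        have := Sum.inr_injective h
        exact Sum.inl_injective this
      injection h2 with h3 h4
      subst h3
      simp [blk]
  · simp [blk]

lemma pairHyp_eq {r' a b : ℕ} {U : Type} [Fintype U] [DecidableEq U]
    {q q' : {q : Fin r' × Fin r' // q.1 < q.2}} {x y : RedVert r' a b U}
    (hx : x ∈ pairHyp r' a b U q) (hy : y ∈ pairHyp r' a b U q)
    (hx' : x ∈ pairHyp r' a b U q') (hy' : y ∈ pairHyp r' a b U q')
    (hxy : x ≠ y) : q = q' := by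
  have hblock : ∀ (z : RedVert r' a b U) i, z = Sum.inr (Sum.inr (q, i)) →
      z ∈ pairHyp r' a b U q' → q = q' := by
    rintro z i rfl hz
    rcases mem_pairHyp.1 hz with h | h | ⟨i', h⟩
    · exact nomatch h
    · exact nomatch h
    · have h2 := Sum.inr_injective (Sum.inr_injective h)
      exact (Prod.ext_iff.1 h2).1
  have hinl : ∀ (z : RedVert r' a b U) (w : Fin r'), z = Sum.inl w →
      z ∈ pairHyp r' a b U q' → w = q'.1.1 ∨ w = q'.1.2 := by
    rintro z w rfl hz
    rcases mem_pairHyp.1 hz with h | h | ⟨i', h⟩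
    · exact Or.inl (Sum.inl_injective h)
    · exact Or.inr (Sum.inl_injective h)
    · exact nomatch h
  have core : (q.1.1 = q'.1.1 ∨ q.1.1 = q'.1.2) → (q.1.2 = q'.1.1 ∨ q.1.2 = q'.1.2) →
      q = q' := by
    intro h1 h2
    have hlt : q.1.1.1 < q.1.2.1 := Fin.lt_def.1 q.2
    have hlt' : q'.1.1.1 < q'.1.2.1 := Fin.lt_def.1 q'.2
    have h1' : q.1.1.1 = q'.1.1.1 ∨ q.1.1.1 = q'.1.2.1 := by
      rcases h1 with h | h
      · exact Or.inl (congrArg Fin.val h)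
      · exact Or.inr (congrArg Fin.val h)
    have h2' : q.1.2.1 = q'.1.1.1 ∨ q.1.2.1 = q'.1.2.1 := by
      rcases h2 with h | h
      · exact Or.inl (congrArg Fin.val h)
      · exact Or.inr (congrArg Fin.val h)
    have hqq : q.1.1.1 = q'.1.1.1 ∧ q.1.2.1 = q'.1.2.1 := by omega
    exact Subtype.ext (Prod.ext (Fin.ext hqq.1) (Fin.ext hqq.2))
  rcases mem_pairHyp.1 hx with hxq | hxq | ⟨i, hxq⟩
  · rcases mem_pairHyp.1 hy with hyq | hyq | ⟨i, hyq⟩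
    · exact absurd (hxq.trans hyq.symm) hxy
    · exact core (hinl x _ hxq hx') (hinl y _ hyq hy')
    · exact hblock y i hyq hy'
  · rcases mem_pairHyp.1 hy with hyq | hyq | ⟨i, hyq⟩
    · exact core (hinl y _ hyq hy') (hinl x _ hxq hx')
    · exact absurd (hxq.trans hyq.symm) hxy
    · exact hblock y i hyq hy'
  · exact hblock x i hxq hx'

end helpers


/-- the W[2]-hardness reduction. `F` is closed under addition of isolated
vertices, contains no edgeless graph, all members have exactly `r` non-isolated vertices,
`δ` is the minimum over `F` of the minimum degree of a non-isolated vertex (attained by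
`Fδ` on `nδ` vertices), and `Fe` (on `ne'` vertices) has the minimum number `me` of edges.
Then `(U, 𝒮)` has a hitting set of size at most `k` iff the constructed hypergraph has an
overlaying graph with at most `C(r-1,2)·me + k·δ` edges. -/
theorem hitting_set_iff_overlay (F : ∀ n, Set (SimpleGraph (Fin n)))
    (hclosed : ClosedUnderIsolated F)
    (hnoedgeless : ∀ n, (⊥ : SimpleGraph (Fin n)) ∉ F n)
    (r : ℕ) (hr : ∀ n, ∀ A ∈ F n, {v | ∃ w, A.Adj v w}.ncard = r)
    (δ nδ : ℕ) (Fδ : SimpleGraph (Fin nδ)) (hFδ : Fδ ∈ F nδ)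
    (hFδdeg : ∃ v, (∃ w, Fδ.Adj v w) ∧ (Fδ.neighborSet v).ncard = δ)
    (hδmin : ∀ n, ∀ A ∈ F n, ∀ v, (∃ w, A.Adj v w) → δ ≤ (A.neighborSet v).ncard)
    (me ne' : ℕ) (Fe : SimpleGraph (Fin ne')) (hFe : Fe ∈ F ne')
    (hFeEdges : Fe.edgeSet.ncard = me)
    (hmemin : ∀ n, ∀ A ∈ F n, me ≤ A.edgeSet.ncard)
    (U : Type) [Fintype U] [DecidableEq U] (𝒮 : Finset (Finset U)) (k : ℕ) :
    (∃ K : Finset U, K.card ≤ k ∧ ∀ S ∈ 𝒮, ∃ u ∈ K, u ∈ S) ↔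
    (∃ G : SimpleGraph (RedVert (r - 1) (nδ - r + 1) (ne' - 2) U),
      Overlays F G (constructedH (r - 1) (nδ - r + 1) (ne' - 2) U 𝒮) ∧
        G.edgeSet.ncard ≤ (r - 1).choose 2 * me + k * δ) := by
  classical
  -- Preliminary facts
  have hedge : ∀ n (A : SimpleGraph (Fin n)), A ∈ F n → ∃ v w, A.Adj v w := by
    intro n A hA
    by_contra h
    push_neg at h
    refine hnoedgeless n ?_
    have : A = ⊥ := by
      ext v w
      simp only [SimpleGraph.bot_adj, iff_false]
      exact h v w
    exact this ▸ hA
  have hrle : ∀ n (A : SimpleGraph (Fin n)), A ∈ F n → r ≤ n := by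
    intro n A hA
    have h1 : {v | ∃ w, A.Adj v w}.ncard ≤ (Set.univ : Set (Fin n)).ncard :=
      Set.ncard_le_ncard (Set.subset_univ _) Set.finite_univ
    rw [hr n A hA, Set.ncard_univ, Nat.card_eq_fintype_card, Fintype.card_fin] at h1
    exact h1
  have hr2 : 2 ≤ r := by
    obtain ⟨v, w, hvw⟩ := hedge nδ Fδ hFδ
    have h1 : ({v, w} : Set (Fin nδ)) ⊆ {v | ∃ w, Fδ.Adj v w} := by
      rintro x (rfl | rfl)
      · exact ⟨w, hvw⟩
      · exact ⟨v, hvw.symm⟩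
    have h2 := Set.ncard_le_ncard h1 (Set.toFinite _)
    rw [hr nδ Fδ hFδ, Set.ncard_pair hvw.ne] at h2
    exact h2
  have hrnδ : r ≤ nδ := hrle nδ Fδ hFδ
  have hne2 : 2 ≤ ne' := le_trans hr2 (hrle ne' Fe hFe)
  have hδ1 : 1 ≤ δ := by
    obtain ⟨v, ⟨w, hvw⟩, hdeg⟩ := hFδdeg
    have : 0 < (Fδ.neighborSet v).ncard := by
      rw [Set.ncard_pos (Set.toFinite _)]
      exact ⟨w, hvw⟩
    omega
  constructor
  · -- Forward direction
    rintro ⟨K, hKcard, hKhit⟩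
    haveI : Nonempty (Fin ne') := ⟨⟨0, by omega⟩⟩
    haveI : Nonempty (Fin nδ) := ⟨⟨0, by omega⟩⟩
    obtain ⟨v₀, hv₀e, hv₀deg⟩ := hFδdeg
    set NF := {v : Fin nδ | ∃ w, Fδ.Adj v w}.toFinite.toFinset with hNF
    have hNFcard : NF.card = r := by
      rw [hNF, ← Set.ncard_eq_toFinset_card]
      exact hr nδ Fδ hFδ
    have hv₀NF : v₀ ∈ NF := by rw [hNF, Set.Finite.mem_toFinset]; exact hv₀e
    have hNF'card : (NF.erase v₀).card = r - 1 := by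
      rw [Finset.card_erase_of_mem hv₀NF, hNFcard]
    set φ : {x // x ∈ NF.erase v₀} ≃ Fin (r-1) :=
      (NF.erase v₀).equivFin.trans (finCongr hNF'card) with hφ
    set ψ : Fin nδ → Fin (r-1) := fun v =>
      if h : v ∈ NF.erase v₀ then φ ⟨v, h⟩ else ⟨0, by omega⟩ with hψ
    have hψinj : ∀ v ∈ NF.erase v₀, ∀ w ∈ NF.erase v₀, ψ v = ψ w → v = w := by
      intro v hv w hw h
      have hv' : ψ v = φ ⟨v, hv⟩ := by simp only [hψ]; rw [dif_pos hv]
      have hw' : ψ w = φ ⟨w, hw⟩ := by simp only [hψ]; rw [dif_pos hw]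
      rw [hv', hw'] at h
      exact Subtype.mk_eq_mk.1 (φ.injective h)
    obtain ⟨a₁, b₁, hab⟩ := hedge ne' Fe hFe
    have hfq : ∀ q : {q : Fin (r-1) × Fin (r-1) // q.1 < q.2},
        ∃ e : Fin ne' ≃ {x // x ∈ pairHyp (r-1) (nδ-r+1) (ne'-2) U q},
          (e a₁ : RedVert (r-1) (nδ-r+1) (ne'-2) U) = Sum.inl q.1.1 ∧
          (e b₁ : RedVert (r-1) (nδ-r+1) (ne'-2) U) = Sum.inl q.1.2 := by
      intro q
      have hcards : Fintype.card (Fin ne') =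
          Fintype.card {x // x ∈ pairHyp (r-1) (nδ-r+1) (ne'-2) U q} := by
        rw [Fintype.card_fin, Fintype.card_coe, pairHyp_card]
        omega
      have hm1 : (Sum.inl q.1.1 : RedVert (r-1) (nδ-r+1) (ne'-2) U) ∈
          pairHyp (r-1) (nδ-r+1) (ne'-2) U q := mem_pairHyp.2 (Or.inl rfl)
      have hm2 : (Sum.inl q.1.2 : RedVert (r-1) (nδ-r+1) (ne'-2) U) ∈
          pairHyp (r-1) (nδ-r+1) (ne'-2) U q := mem_pairHyp.2 (Or.inr (Or.inl rfl))
      set g : Fin ne' → {x // x ∈ pairHyp (r-1) (nδ-r+1) (ne'-2) U q} := fun z =>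
        if z = a₁ then ⟨_, hm1⟩ else ⟨_, hm2⟩ with hgdef
      have hga : g a₁ = ⟨Sum.inl q.1.1, hm1⟩ := by simp [hgdef]
      have hgb : g b₁ = ⟨Sum.inl q.1.2, hm2⟩ := by simp only [hgdef]; rw [if_neg hab.ne']
      have hinj : Set.InjOn g ↑({a₁, b₁} : Finset (Fin ne')) := by
        intro z hz z' hz' h
        simp only [Finset.coe_insert, Finset.coe_singleton, Set.mem_insert_iff,
          Set.mem_singleton_iff] at hz hz'
        have hq12 : q.1.1 ≠ q.1.2 := q.2.ne
        rcases hz with h1 | h1 <;> rcases hz' with h2 | h2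
        · rw [h1, h2]
        · rw [h1, h2] at h
          rw [hga, hgb] at h
          exact absurd (Sum.inl_injective (congrArg Subtype.val h)) hq12
        · rw [h1, h2] at h
          rw [hga, hgb] at h
          exact absurd (Sum.inl_injective (congrArg Subtype.val h.symm)) hq12
        · rw [h1, h2]
      obtain ⟨e, he⟩ := exists_equiv_extend hcards ({a₁, b₁} : Finset (Fin ne')) g hinj
      refine ⟨e, ?_, ?_⟩
      · rw [he a₁ (Finset.mem_insert_self _ _), hga]
      · rw [he b₁ (Finset.mem_insert_of_mem (Finset.mem_singleton_self _)), hgb]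
    choose fq hfq1 hfq2 using hfq
    set j₀ : Fin (nδ - r + 1) := ⟨0, by omega⟩ with hj₀
    set E1 : Finset (Sym2 (RedVert (r-1) (nδ-r+1) (ne'-2) U)) :=
      Finset.univ.biUnion (fun q => (Fe.edgeSet.toFinite.toFinset).image
        (Sym2.map (fun i => (fq q i : RedVert (r-1) (nδ-r+1) (ne'-2) U)))) with hE1
    set E2 : Finset (Sym2 (RedVert (r-1) (nδ-r+1) (ne'-2) U)) :=
      K.biUnion (fun u => ((Fδ.neighborSet v₀).toFinite.toFinset).image
        (fun w => s((Sum.inr (Sum.inl (u, j₀)) : RedVert (r-1) (nδ-r+1) (ne'-2) U),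
          Sum.inl (ψ w)))) with hE2
    set G := SimpleGraph.fromEdgeSet
      (↑(E1 ∪ E2) : Set (Sym2 (RedVert (r-1) (nδ-r+1) (ne'-2) U))) with hG
    have hclique : ∀ x y : Fin (r-1), x < y →
        s((Sum.inl x : RedVert (r-1) (nδ-r+1) (ne'-2) U), Sum.inl y) ∈ E1 := by
      intro x y hlt
      rw [hE1]
      refine Finset.mem_biUnion.2 ⟨⟨(x, y), hlt⟩, Finset.mem_univ _, ?_⟩
      refine Finset.mem_image.2 ⟨s(a₁, b₁), ?_, ?_⟩
      · rw [Set.Finite.mem_toFinset, SimpleGraph.mem_edgeSet]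
        exact hab
      · rw [Sym2.map_pair_eq, hfq1, hfq2]
    have hclique' : ∀ x y : Fin (r-1), x ≠ y →
        G.Adj (Sum.inl x) (Sum.inl y) := by
      intro x y hne
      rw [hG, SimpleGraph.fromEdgeSet_adj]
      refine ⟨?_, by simpa using hne⟩
      rcases lt_or_gt_of_ne hne with h | h
      · exact Finset.mem_coe.2 (Finset.mem_union_left _ (hclique x y h))
      · rw [Sym2.eq_swap]
        exact Finset.mem_coe.2 (Finset.mem_union_left _ (hclique y x h))
    refine ⟨G, ?_, ?_⟩
    · intro S' hS'
      rw [constructedH_eq, Finset.mem_union] at hS'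
      rcases hS' with hS' | hS'
      · obtain ⟨q, -, rfl⟩ := Finset.mem_image.1 hS'
        have hle : ne' ≤ (pairHyp (r-1) (nδ-r+1) (ne'-2) U q).card := by
          rw [pairHyp_card]
          omega
        obtain ⟨B, hBF, ι, hι, hBadj⟩ := closure_le F hclosed Fe hFe _ hle
        have hcards : Fintype.card (Fin ((pairHyp (r-1) (nδ-r+1) (ne'-2) U q).card)) =
            Fintype.card {x // x ∈ pairHyp (r-1) (nδ-r+1) (ne'-2) U q} := by
          rw [Fintype.card_fin, Fintype.card_coe]
        have hinj : Set.InjOn (fun z => fq q (Function.invFun ι z))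
            ↑(Finset.univ.image ι) := by
          intro z hz z' hz' h
          simp only [Finset.coe_image, Set.mem_image] at hz hz'
          obtain ⟨w, -, rfl⟩ := hz
          obtain ⟨w', -, rfl⟩ := hz'
          have h' : fq q (Function.invFun ι (ι w)) = fq q (Function.invFun ι (ι w')) := h
          rw [Function.leftInverse_invFun hι w, Function.leftInverse_invFun hι w'] at h'
          rw [(fq q).injective h']
        obtain ⟨e, he⟩ := exists_equiv_extend hcards (Finset.univ.image ι) _ hinj
        refine ⟨B, hBF, e, ?_⟩
        intro α β hαβ
        obtain ⟨xx, yy, hxy, rfl, rfl⟩ := hBadj α β hαβ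
        have hex : e (ι xx) = fq q xx := by
          have h2 : fq q (Function.invFun ι (ι xx)) = fq q xx := by
            rw [Function.leftInverse_invFun hι xx]
          exact (he (ι xx) (Finset.mem_image_of_mem ι (Finset.mem_univ xx))).trans h2
        have hey : e (ι yy) = fq q yy := by
          have h2 : fq q (Function.invFun ι (ι yy)) = fq q yy := by
            rw [Function.leftInverse_invFun hι yy]
          exact (he (ι yy) (Finset.mem_image_of_mem ι (Finset.mem_univ yy))).trans h2
        rw [hex, hey, hG, SimpleGraph.fromEdgeSet_adj]
        constructor
        · refine Finset.mem_coe.2 (Finset.mem_union_left _ ?_)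
          rw [hE1]
          refine Finset.mem_biUnion.2 ⟨q, Finset.mem_univ _, Finset.mem_image.2
            ⟨s(xx, yy), ?_, Sym2.map_pair_eq _ _ _⟩⟩
          rw [Set.Finite.mem_toFinset, SimpleGraph.mem_edgeSet]
          exact hxy
        · intro hcon
          exact hxy.ne ((fq q).injective (Subtype.coe_injective hcon))
      · obtain ⟨S, hS, rfl⟩ := Finset.mem_image.1 hS'
        obtain ⟨u, huK, huS⟩ := hKhit S hS
        have hScard1 : 0 < S.card := Finset.card_pos.2 ⟨u, huS⟩
        have hle : nδ ≤ (setHyp (r-1) (nδ-r+1) (ne'-2) U S).card := by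
          rw [setHyp_card]
          have h5 : (nδ - r + 1) ≤ S.card * (nδ - r + 1) :=
            Nat.le_mul_of_pos_left _ hScard1
          omega
        obtain ⟨B, hBF, ι, hι, hBadj⟩ := closure_le F hclosed Fδ hFδ _ hle
        have hcards : Fintype.card (Fin ((setHyp (r-1) (nδ-r+1) (ne'-2) U S).card)) =
            Fintype.card {x // x ∈ setHyp (r-1) (nδ-r+1) (ne'-2) U S} := by
          rw [Fintype.card_fin, Fintype.card_coe]
        have hm1 : (Sum.inr (Sum.inl (u, j₀)) : RedVert (r-1) (nδ-r+1) (ne'-2) U) ∈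
            setHyp (r-1) (nδ-r+1) (ne'-2) U S := mem_setHyp.2 (Or.inr ⟨u, j₀, huS, rfl⟩)
        have hm2 : ∀ i : Fin (r-1), (Sum.inl i : RedVert (r-1) (nδ-r+1) (ne'-2) U) ∈
            setHyp (r-1) (nδ-r+1) (ne'-2) U S := fun i => mem_setHyp.2 (Or.inl ⟨i, rfl⟩)
        set t : Fin nδ → {x // x ∈ setHyp (r-1) (nδ-r+1) (ne'-2) U S} := fun v =>
          if v = v₀ then ⟨_, hm1⟩ else ⟨Sum.inl (ψ v), hm2 (ψ v)⟩ with ht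
        have ht0 : t v₀ = ⟨Sum.inr (Sum.inl (u, j₀)), hm1⟩ := by simp [ht]
        have htv : ∀ v, v ≠ v₀ → t v = ⟨Sum.inl (ψ v), hm2 (ψ v)⟩ := by
          intro v hv
          simp only [ht]
          rw [if_neg hv]
        have htinj : ∀ v ∈ NF, ∀ w ∈ NF, t v = t w → v = w := by
          intro v hv w hw h
          by_cases h1 : v = v₀ <;> by_cases h2 : w = v₀
          · rw [h1, h2]
          · rw [h1, ht0, htv w h2] at h
            exact absurd (congrArg Subtype.val h) (by simp)
          · rw [h2, ht0, htv v h1] at h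
            exact absurd (congrArg Subtype.val h) (by simp)
          · rw [htv v h1, htv w h2] at h
            have h3 : ψ v = ψ w := Sum.inl_injective (congrArg Subtype.val h)
            exact hψinj v (Finset.mem_erase.2 ⟨h1, hv⟩) w (Finset.mem_erase.2 ⟨h2, hw⟩) h3
        have hinj : Set.InjOn (fun z => t (Function.invFun ι z)) ↑(NF.image ι) := by
          intro z hz z' hz' h
          simp only [Finset.coe_image, Set.mem_image, Finset.mem_coe] at hz hz'
          obtain ⟨w, hw, rfl⟩ := hz
          obtain ⟨w', hw', rfl⟩ := hz'
          have h' : t (Function.invFun ι (ι w)) = t (Function.invFun ι (ι w')) := h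
          rw [Function.leftInverse_invFun hι w, Function.leftInverse_invFun hι w'] at h'
          rw [htinj w hw w' hw' h']
        obtain ⟨e, he⟩ := exists_equiv_extend hcards (NF.image ι) _ hinj
        refine ⟨B, hBF, e, ?_⟩
        intro α β hαβ
        obtain ⟨xx, yy, hxy, rfl, rfl⟩ := hBadj α β hαβ
        have hxNF : xx ∈ NF := by
          rw [hNF, Set.Finite.mem_toFinset]
          exact ⟨yy, hxy⟩
        have hyNF : yy ∈ NF := by
          rw [hNF, Set.Finite.mem_toFinset]
          exact ⟨xx, hxy.symm⟩
        have hex : e (ι xx) = t xx := by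
          have h2 : t (Function.invFun ι (ι xx)) = t xx := by
            rw [Function.leftInverse_invFun hι xx]
          exact (he (ι xx) (Finset.mem_image_of_mem ι hxNF)).trans h2
        have hey : e (ι yy) = t yy := by
          have h2 : t (Function.invFun ι (ι yy)) = t yy := by
            rw [Function.leftInverse_invFun hι yy]
          exact (he (ι yy) (Finset.mem_image_of_mem ι hyNF)).trans h2
        rw [hex, hey]
        have hadj2 : ∀ w, Fδ.Adj v₀ w → G.Adj (t v₀).1 (t w).1 := by
          intro w hw
          have hwv₀ : w ≠ v₀ := fun hh => Fδ.irrefl (hh ▸ hw)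
          rw [ht0, htv w hwv₀]
          rw [hG, SimpleGraph.fromEdgeSet_adj]
          constructor
          · refine Finset.mem_coe.2 (Finset.mem_union_right _ ?_)
            rw [hE2]
            refine Finset.mem_biUnion.2 ⟨u, huK, Finset.mem_image.2 ⟨w, ?_, rfl⟩⟩
            rw [Set.Finite.mem_toFinset]
            exact hw
          · simp
        by_cases h1 : xx = v₀
        · subst h1
          exact hadj2 yy hxy
        by_cases h2 : yy = v₀
        · subst h2
          exact (hadj2 xx hxy.symm).symm
        · rw [htv xx h1, htv yy h2]
          have hψne : ψ xx ≠ ψ yy := fun hcon => hxy.ne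
            (hψinj xx (Finset.mem_erase.2 ⟨h1, hxNF⟩) yy (Finset.mem_erase.2 ⟨h2, hyNF⟩) hcon)
          exact hclique' (ψ xx) (ψ yy) hψne
    · have hsub : G.edgeSet ⊆ ↑(E1 ∪ E2) := by
        rw [hG, SimpleGraph.edgeSet_fromEdgeSet]
        exact Set.diff_subset
      have h1 : G.edgeSet.ncard ≤ (E1 ∪ E2).card := by
        rw [← Set.ncard_coe_finset (E1 ∪ E2)]
        exact Set.ncard_le_ncard hsub (Set.toFinite _)
      have hE1card : E1.card ≤ (r-1).choose 2 * me := by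
        rw [hE1]
        refine le_trans Finset.card_biUnion_le ?_
        refine le_trans (Finset.sum_le_sum (g := fun _ => me) (fun q _ => ?_)) ?_
        · exact le_trans Finset.card_image_le
            (le_of_eq (by rw [← Set.ncard_eq_toFinset_card, hFeEdges]))
        · rw [Finset.sum_const, Finset.card_univ, card_lt_pairs, smul_eq_mul]
      have hE2card : E2.card ≤ k * δ := by
        rw [hE2]
        refine le_trans Finset.card_biUnion_le ?_
        refine le_trans (Finset.sum_le_sum (g := fun _ => δ) (fun u _ => ?_)) ?_
        · exact le_trans Finset.card_image_le
            (le_of_eq (by rw [← Set.ncard_eq_toFinset_card, hv₀deg]))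
        · rw [Finset.sum_const, smul_eq_mul]
          exact Nat.mul_le_mul_right δ hKcard
      have h2 := Finset.card_union_le E1 E2
      omega
  · -- Reverse direction
    rintro ⟨G, hov, hcount⟩
    have hov' : ∀ S ∈ constructedH (r-1) (nδ-r+1) (ne'-2) U 𝒮,
        ∃ A ∈ F S.card, ∃ e : Fin S.card ≃ {x // x ∈ S},
          ∀ a b, A.Adj a b → G.Adj (e a).1 (e b).1 := hov
    have hpairmem : ∀ q : {q : Fin (r-1) × Fin (r-1) // q.1 < q.2},
        pairHyp (r-1) (nδ-r+1) (ne'-2) U q ∈ constructedH (r-1) (nδ-r+1) (ne'-2) U 𝒮 := by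
      intro q
      rw [constructedH_eq]
      exact Finset.mem_union_left _ (Finset.mem_image_of_mem _ (Finset.mem_univ q))
    choose Aq hAqF eq' heq' using fun q => hov' _ (hpairmem q)
    set EG := G.edgeSet.toFinite.toFinset with hEG
    have hEGcard : EG.card ≤ (r-1).choose 2 * me + k * δ := by
      rw [hEG, ← Set.ncard_eq_toFinset_card]
      exact hcount
    set T := EG.filter (fun e => ∃ x ∈ e, blk x ≠ none) with hT
    set Dq := fun q : {q : Fin (r-1) × Fin (r-1) // q.1 < q.2} =>
      ((Aq q).edgeSet.toFinite.toFinset).image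
        (Sym2.map (fun i => ((eq' q i : RedVert (r-1) (nδ-r+1) (ne'-2) U)))) with hDq
    have hmecard : ∀ q, me ≤ (Dq q).card := by
      intro q
      simp only [hDq]
      rw [Finset.card_image_of_injective _ (Sym2.map.injective
        (fun i j h => (eq' q).injective (Subtype.coe_injective h)))]
      rw [← Set.ncard_eq_toFinset_card]
      exact hmemin _ _ (hAqF q)
    have hDqEG : ∀ q, ∀ ed ∈ Dq q, ed ∈ EG ∧
        ∀ x ∈ ed, x ∈ pairHyp (r-1) (nδ-r+1) (ne'-2) U q := by
      intro q ed hed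
      simp only [hDq, Finset.mem_image, Set.Finite.mem_toFinset] at hed
      obtain ⟨e₀, he₀, rfl⟩ := hed
      induction e₀ using Sym2.ind with
      | _ x y =>
        rw [SimpleGraph.mem_edgeSet] at he₀
        rw [Sym2.map_pair_eq]
        constructor
        · rw [hEG, Set.Finite.mem_toFinset, SimpleGraph.mem_edgeSet]
          exact heq' q x y he₀
        · intro z hz
          rcases Sym2.mem_iff.1 hz with rfl | rfl
          · exact (eq' q x).2
          · exact (eq' q y).2
    have hDqdisj : ∀ q ∈ (Finset.univ : Finset {q : Fin (r-1) × Fin (r-1) // q.1 < q.2}),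
        ∀ q' ∈ (Finset.univ : Finset {q : Fin (r-1) × Fin (r-1) // q.1 < q.2}),
        q ≠ q' → Disjoint (Dq q) (Dq q') := by
      intro q _ q' _ hqq'
      rw [Finset.disjoint_left]
      intro ed hed hed'
      obtain ⟨hedEG, hin⟩ := hDqEG q ed hed
      obtain ⟨-, hin'⟩ := hDqEG q' ed hed'
      have hnd : ¬ ed.IsDiag := by
        have hmem : ed ∈ G.edgeSet := by rwa [hEG, Set.Finite.mem_toFinset] at hedEG
        exact G.not_isDiag_of_mem_edgeSet hmem
      induction ed using Sym2.ind with
      | _ x y =>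
        have hxy : x ≠ y := by simpa [Sym2.isDiag_iff_proj_eq] using hnd
        exact hqq' (pairHyp_eq (hin x (Sym2.mem_mk_left x y)) (hin y (Sym2.mem_mk_right x y))
          (hin' x (Sym2.mem_mk_left x y)) (hin' y (Sym2.mem_mk_right x y)) hxy)
    have hDqT : ∀ q, Dq q ⊆ EG.filter (fun e => ¬ ∃ x ∈ e, blk x ≠ none) := by
      intro q ed hed
      obtain ⟨hedEG, hin⟩ := hDqEG q ed hed
      refine Finset.mem_filter.2 ⟨hedEG, ?_⟩
      rintro ⟨x, hx, hblk⟩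
      rcases mem_pairHyp.1 (hin x hx) with rfl | rfl | ⟨i, rfl⟩ <;> simp [blk] at hblk
    have hbig : (Finset.univ.biUnion Dq) ∪ T ⊆ EG := by
      intro ed hed
      rcases Finset.mem_union.1 hed with hed | hed
      · obtain ⟨q, -, hq⟩ := Finset.mem_biUnion.1 hed
        exact (hDqEG q ed hq).1
      · exact (Finset.mem_filter.1 hed).1
    have hdisjDT : Disjoint (Finset.univ.biUnion Dq) T := by
      rw [hT]
      refine Finset.disjoint_left.2 fun ed hed hed' => ?_
      obtain ⟨q, -, hq⟩ := Finset.mem_biUnion.1 hed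
      exact (Finset.mem_filter.1 (hDqT q hq)).2 (Finset.mem_filter.1 hed').2
    have hDcard : (r-1).choose 2 * me ≤ (Finset.univ.biUnion Dq).card := by
      rw [Finset.card_biUnion hDqdisj]
      have h5 := Finset.card_nsmul_le_sum Finset.univ (fun q => (Dq q).card) me
        (fun q _ => hmecard q)
      rwa [Finset.card_univ, card_lt_pairs, smul_eq_mul] at h5
    have hTcard : T.card ≤ k * δ := by
      have h1 := Finset.card_le_card hbig
      rw [Finset.card_union_of_disjoint hdisjDT] at h1
      omega
    have hwit : ∀ S ∈ 𝒮, ∃ u ∈ S, ∃ E₀ ⊆ T, δ ≤ E₀.card ∧ ∀ e ∈ E₀,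
        (∃ x ∈ e, blk x = some u) ∧ (∀ x ∈ e, ∀ u', blk x = some u' → u' ∈ S) := by
      intro S hS
      have hmem : setHyp (r-1) (nδ-r+1) (ne'-2) U S ∈
          constructedH (r-1) (nδ-r+1) (ne'-2) U 𝒮 := by
        rw [constructedH_eq]
        exact Finset.mem_union_right _ (Finset.mem_image_of_mem _ hS)
      obtain ⟨A, hAF, e, he⟩ := hov' _ hmem
      have hN : {v | ∃ w, A.Adj v w}.ncard = r := hr _ _ hAF
      have hout : ∃ x, (∃ w, A.Adj x w) ∧
          ∀ i, (e x : RedVert (r-1) (nδ-r+1) (ne'-2) U) ≠ Sum.inl i := by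
        by_contra hcon
        push_neg at hcon
        set f : Fin ((setHyp (r-1) (nδ-r+1) (ne'-2) U S).card) → Fin (r-1) := fun v =>
          Sum.elim (fun i => i) (fun _ => (⟨0, by omega⟩ : Fin (r-1)))
            (e v : RedVert (r-1) (nδ-r+1) (ne'-2) U) with hf
        have hle : {v | ∃ w, A.Adj v w}.ncard ≤ (Set.univ : Set (Fin (r-1))).ncard := by
          refine Set.ncard_le_ncard_of_injOn f (fun v _ => Set.mem_univ (f v)) ?_ Set.finite_univ
          intro v hv w hw hfvw
          obtain ⟨i, hi⟩ := hcon v hv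
          obtain ⟨i', hi'⟩ := hcon w hw
          have hfv : f v = i := by rw [hf]; simp only [hi, Sum.elim_inl]
          have hfw : f w = i' := by rw [hf]; simp only [hi', Sum.elim_inl]
          have hii : i = i' := by rw [← hfv, ← hfw, hfvw]
          have hev : (e v : RedVert (r-1) (nδ-r+1) (ne'-2) U) = e w := by
            rw [hi, hi', hii]
          exact e.injective (Subtype.coe_injective hev)
        rw [hN, Set.ncard_univ, Nat.card_eq_fintype_card, Fintype.card_fin] at hle
        omega
      obtain ⟨x, hxN, hxnot⟩ := hout
      rcases mem_setHyp.1 (e x).2 with ⟨i, hi⟩ | ⟨u, j, huS, huj⟩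
      · exact absurd hi (hxnot i)
      refine ⟨u, huS, ((A.neighborSet x).toFinite.toFinset).image
        (fun y => s((e x : RedVert (r-1) (nδ-r+1) (ne'-2) U), (e y : RedVert (r-1) (nδ-r+1) (ne'-2) U))), ?_, ?_, ?_⟩
      · intro ed hed
        simp only [Finset.mem_image, Set.Finite.mem_toFinset] at hed
        obtain ⟨y, hy, rfl⟩ := hed
        rw [hT]
        refine Finset.mem_filter.2 ⟨?_, ⟨(e x : RedVert (r-1) (nδ-r+1) (ne'-2) U),
          Sym2.mem_mk_left _ _, ?_⟩⟩
        · rw [hEG, Set.Finite.mem_toFinset, SimpleGraph.mem_edgeSet]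
          exact he x y hy
        · rw [blk_eq_some.2 ⟨j, huj⟩]
          simp
      · have hinj : Set.InjOn
            (fun y => s((e x : RedVert (r-1) (nδ-r+1) (ne'-2) U), (e y : RedVert (r-1) (nδ-r+1) (ne'-2) U)))
            ↑((A.neighborSet x).toFinite.toFinset) := by
          intro y hy y' hy' hyy'
          simp only [Set.Finite.coe_toFinset, SimpleGraph.mem_neighborSet] at hy hy'
          simp only [Sym2.eq_iff] at hyy'
          rcases hyy' with ⟨-, h2⟩ | ⟨h1, h2⟩
          · exact e.injective (Subtype.coe_injective h2)
          · exfalso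
            have hyx : y' = x := e.injective (Subtype.coe_injective h1.symm)
            subst hyx
            exact A.irrefl hy'
        rw [Finset.card_image_of_injOn hinj, ← Set.ncard_eq_toFinset_card]
        exact hδmin _ _ hAF x hxN
      · intro ed hed
        simp only [Finset.mem_image, Set.Finite.mem_toFinset] at hed
        obtain ⟨y, hy, rfl⟩ := hed
        constructor
        · exact ⟨(e x : RedVert (r-1) (nδ-r+1) (ne'-2) U), Sym2.mem_mk_left _ _,
            blk_eq_some.2 ⟨j, huj⟩⟩
        · intro z hz u' hbz
          have hzmem : z ∈ setHyp (r-1) (nδ-r+1) (ne'-2) U S := by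
            rcases Sym2.mem_iff.1 hz with rfl | rfl
            · exact (e x).2
            · exact (e y).2
          obtain ⟨j', hz'⟩ := blk_eq_some.1 hbz
          rcases mem_setHyp.1 hzmem with ⟨i, hi⟩ | ⟨u'', j'', hu''S, hu''⟩
          · rw [hi] at hz'
            exact nomatch hz'
          · rw [hu''] at hz'
            have hpq := Sum.inl_injective (Sum.inr_injective hz')
            have h1 : u'' = u' := congrArg Prod.fst hpq
            exact h1 ▸ hu''S
    exact hitting_lemma δ hδ1 blk k 𝒮 T hTcard hwit
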